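/- Let x₀ be the smallest natural number with (x₀,1) ∈ S_Γ^s. For all x > F(Γ) + x₀ and all n ≥ 2, the element (x,n) is reducible in S_Γ^s, i.e., it can be written as a sum of two nonzero elements of S_Γ^s. -/
import Mathlib


/-- The Leamer monoid as a subset of ℕ × ℕ: (0,0) together with all (x,n), n ≥ 1,
such that x + i*s ∈ Γ for all 0 ≤ i ≤ n. -/
def Leamer (Γ : AddSubmonoid ℕ) (s : ℕ) : Set (ℕ × ℕ) :=
  {p | p = (0, 0) ∨ (1 ≤ p.2 ∧ ∀ i ≤ p.2, p.1 + i * s ∈ Γ)}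

/-- An irreducible (atom) of a subset S of ℕ × ℕ: a nonzero element of S that is not the
sum of two nonzero elements of S. -/
def LIrred (S : Set (ℕ × ℕ)) (z : ℕ × ℕ) : Prop :=
  z ∈ S ∧ z ≠ 0 ∧ ∀ a b : ℕ × ℕ, a ∈ S → b ∈ S → a ≠ 0 → b ≠ 0 → z ≠ a + b

/-- A reducible element of S: an element of S that is the sum of two nonzero elements of S. -/
def LReducible (S : Set (ℕ × ℕ)) (z : ℕ × ℕ) : Prop :=
  z ∈ S ∧ ∃ a b : ℕ × ℕ, a ∈ S ∧ b ∈ S ∧ a ≠ 0 ∧ b ≠ 0 ∧ z = a + b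

/-- The set of factorization lengths of z into irreducibles of S. -/
def LSet (S : Set (ℕ × ℕ)) (z : ℕ × ℕ) : Set ℕ :=
  {r | ∃ l : Multiset (ℕ × ℕ), Multiset.card l = r ∧ (∀ a ∈ l, LIrred S a) ∧ l.sum = z}

/-- The Delta set of z: differences of successive factorization lengths. -/
def LDelta (S : Set (ℕ × ℕ)) (z : ℕ × ℕ) : Set ℕ :=
  {d | ∃ a b, a ∈ LSet S z ∧ b ∈ LSet S z ∧ a < b ∧
    (∀ c, a < c → c < b → c ∉ LSet S z) ∧ d = b - a}

/-- The Delta set of the monoid S. -/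
def LDeltaMonoid (S : Set (ℕ × ℕ)) : Set ℕ :=
  {d | ∃ z, z ∈ S ∧ z ≠ 0 ∧ d ∈ LDelta S z}

/-- The Frobenius number of a numerical monoid Γ. -/
noncomputable def Frob (Γ : AddSubmonoid ℕ) : ℕ := sSup {x | x ∉ Γ}

/-- The numerical monoid generated by the arithmetic sequence m, m+s, ..., m+ks. -/
def ArithGamma (m k s : ℕ) : AddSubmonoid ℕ :=
  AddSubmonoid.closure {v | ∃ j ≤ k, v = m + j * s}

theorem stmt7 (Γ : AddSubmonoid ℕ) (hΓ : {x : ℕ | x ∉ Γ}.Finite) (s : ℕ) (hs : s ∉ Γ)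
    (x₀ : ℕ) (hx₀ : IsLeast {x : ℕ | (x, 1) ∈ Leamer Γ s} x₀) :
    ∀ x n : ℕ, Frob Γ + x₀ < x → 2 ≤ n →
      ∃ a b : ℕ × ℕ, a ∈ Leamer Γ s ∧ b ∈ Leamer Γ s ∧ a ≠ 0 ∧ b ≠ 0 ∧ (x, n) = a + b := by
  intro x n hx hn
  have key : ∀ m : ℕ, Frob Γ < m → m ∈ Γ := by
    intro m hm
    by_contra hmem
    exact absurd (le_csSup hΓ.bddAbove hmem) (not_le.mpr hm)
  have hx0x : x₀ ≤ x := le_trans (Nat.le_add_left _ _) hx.le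
  refine ⟨(x₀, 1), (x - x₀, n - 1), hx₀.1, ?_, ?_, ?_, ?_⟩
  · refine Or.inr ⟨by omega, fun i hi => ?_⟩
    exact key _ (by omega)
  · simp [Prod.ext_iff]
  · simp [Prod.ext_iff]; omega
  · simp [Prod.ext_iff]; omega
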